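/- Let τ and τ' be stopping times on a filtered probability space with τ < τ' on an event E, and assume τ' is predictable (announceable), i.e. there exist stopping times τ'_m ↑ τ' with τ'_m < τ'_{m+1} < τ' on {τ' > 0}. Then there exists a stopping time τ̄ satisfying τ < τ̄ < τ' on E. -/

import Mathlib

open MeasureTheory Filter

/-- If `τ < τ'` on an event `E` and `τ'` is predictable (announceable by stopping times
`τ'_m ↑ τ'` with `τ'_m < τ'_{m+1} < τ'` on `{τ' > 0}`), then there is a stopping time
`τ̄` with `τ < τ̄ < τ'` on `E`. -/
theorem stmt_17 {Ω : Type*} {mΩ : MeasurableSpace Ω} (μ : Measure Ω)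
    [IsProbabilityMeasure μ]
    (ℱ : Filtration ℝ mΩ)
    (τ τ' : Ω → ℝ)
    (hτ : IsStoppingTime ℱ (fun ω => (τ ω : WithTop ℝ))) (hτ' : IsStoppingTime ℱ (fun ω => (τ' ω : WithTop ℝ)))
    (hτnonneg : ∀ ω, 0 ≤ τ ω)
    (E : Set Ω) (hE : MeasurableSet E)
    (hlt : ∀ ω ∈ E, τ ω < τ' ω)
    (τm : ℕ → Ω → ℝ)
    (hτm : ∀ m, IsStoppingTime ℱ (fun ω => (τm m ω : WithTop ℝ)))
    (hτmlim : ∀ ω, Tendsto (fun m => τm m ω) atTop (nhds (τ' ω)))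
    (hτmmono : ∀ ω, 0 < τ' ω → ∀ m, τm m ω < τm (m + 1) ω ∧ τm (m + 1) ω < τ' ω) :
    ∃ τbar : Ω → ℝ, IsStoppingTime ℱ (fun ω => (τbar ω : WithTop ℝ)) ∧
      ∀ ω ∈ E, τ ω < τbar ω ∧ τbar ω < τ' ω := by
  classical
  -- τbar: the first announcing time strictly after τ, or τ + 1 if none exists.
  set τbar : Ω → ℝ := fun ω =>
    if h : ∃ m, τ ω < τm m ω then τm (Nat.find h) ω else τ ω + 1 with hτbar_def
  -- Sets measurable w.r.t. the σ-algebra of the stopping time τ.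
  have hD : ∀ m, MeasurableSet[hτ.measurableSpace] {ω | τ ω < τm m ω} := by
    intro m
    have : MeasurableSet[hτ.measurableSpace] {ω | τm m ω ≤ τ ω} :=
      by simpa only [WithTop.coe_le_coe] using IsStoppingTime.measurableSet_stopping_time_le (hτm m) hτ
    have := this.compl
    convert this using 1
    ext ω
    simp [not_le]
  have hC : ∀ m, MeasurableSet[hτ.measurableSpace]
      ({ω | τ ω < τm m ω} ∩ ⋂ k < m, {ω | τ ω < τm k ω}ᶜ) := by
    intro m
    exact (hD m).inter (MeasurableSet.biInter (Set.to_countable _)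
      fun k _ => (hD k).compl)
  have hS0 : MeasurableSet[hτ.measurableSpace] (⋂ m, {ω | τ ω < τm m ω}ᶜ) :=
    MeasurableSet.iInter fun m => (hD m).compl
  refine ⟨τbar, ?_, ?_⟩
  · -- stopping time property
    intro t
    have hset : {ω | τbar ω ≤ t} =
        (⋃ m, (({ω | τ ω < τm m ω} ∩ ⋂ k < m, {ω | τ ω < τm k ω}ᶜ) ∩ {ω | τ ω ≤ t})
            ∩ {ω | τm m ω ≤ t})
          ∪ ((⋂ m, {ω | τ ω < τm m ω}ᶜ) ∩ {ω | τ ω ≤ t - 1}) := by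
      ext ω
      simp only [Set.mem_union, Set.mem_iUnion, Set.mem_inter_iff, Set.mem_setOf_eq,
        Set.mem_iInter, Set.mem_compl_iff, hτbar_def]
      constructor
      · intro hle
        by_cases h : ∃ m, τ ω < τm m ω
        · rw [dif_pos h] at hle
          left
          refine ⟨Nat.find h, ⟨⟨Nat.find_spec h, ?_⟩, ?_⟩, hle⟩
          · intro k hk
            simpa using Nat.find_min h hk
          · exact le_trans (le_of_lt (Nat.find_spec h)) hle
        · rw [dif_neg h] at hle
          right
          refine ⟨fun m => ?_, by linarith⟩
          exact fun hc => h ⟨m, hc⟩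
      · rintro (⟨m, ⟨⟨hm, hmin⟩, _⟩, hmt⟩ | ⟨hno, ht⟩)
        · have h : ∃ m, τ ω < τm m ω := ⟨m, hm⟩
          rw [dif_pos h]
          have : Nat.find h = m := by
            refine le_antisymm (Nat.find_min' h hm) ?_
            by_contra hcon
            push_neg at hcon
            exact hmin _ hcon (Nat.find_spec h)
          rw [this]
          exact hmt
        · have h : ¬ ∃ m, τ ω < τm m ω := by
            rintro ⟨m, hm⟩; exact hno m hm
          rw [dif_neg h]
          linarith
    have h1 : ∀ m, MeasurableSet[ℱ t]
        ((({ω | τ ω < τm m ω} ∩ ⋂ k < m, {ω | τ ω < τm k ω}ᶜ) ∩ {ω | τ ω ≤ t})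
          ∩ {ω | τm m ω ≤ t}) := by
      intro m
      simpa only [WithTop.coe_le_coe] using (((hτ.measurableSet _).mp (hC m)).2 t).inter ((hτm m).measurableSet_le t)
    have h2 : MeasurableSet[ℱ t] ((⋂ m, {ω | τ ω < τm m ω}ᶜ) ∩ {ω | τ ω ≤ t - 1}) := by
      have := ((hτ.measurableSet _).mp hS0).2 (t - 1)
      simp only [WithTop.coe_le_coe] at this
      exact ℱ.mono (by linarith) _ this
    simp only [WithTop.coe_le_coe]
    rw [hset]
    exact (MeasurableSet.iUnion h1).union h2
  · -- the inequalities on E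
    intro ω hω
    have hτ'pos : 0 < τ' ω := lt_of_le_of_lt (hτnonneg ω) (hlt ω hω)
    have hall : ∀ m, τm m ω < τ' ω := fun m =>
      lt_trans (hτmmono ω hτ'pos m).1 (hτmmono ω hτ'pos m).2
    have h : ∃ m, τ ω < τm m ω := by
      have := (hτmlim ω).eventually_const_lt (hlt ω hω)
      exact this.exists
    simp only [hτbar_def]
    rw [dif_pos h]
    exact ⟨Nat.find_spec h, hall _⟩
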